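/- arXiv:1410.1806 — 3 statements merged into one kernel-verified Lean document; each statement's English description precedes it below -/
import Mathlib

section
/- Let Δ < 0 be a discriminant and (a,b,c) ∈ T_Δ. Then the point τ(a,b,c) = (b + √Δ)/(2a) belongs to the standard fundamental domain 𝔇. -/
open Complex Polynomial

/-- The Eisenstein lattice sum `g₂(z) = 60 Σ' 1/(mz+n)⁴`. -/
noncomputable def g2 (z : ℂ) : ℂ :=
  60 * ∑' p : {p : ℤ × ℤ // p ≠ 0}, 1 / (((p : ℤ × ℤ).1 : ℂ) * z + ((p : ℤ × ℤ).2 : ℂ)) ^ 4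

/-- The Eisenstein lattice sum `g₃(z) = 140 Σ' 1/(mz+n)⁶`. -/
noncomputable def g3 (z : ℂ) : ℂ :=
  140 * ∑' p : {p : ℤ × ℤ // p ≠ 0}, 1 / (((p : ℤ × ℤ).1 : ℂ) * z + ((p : ℤ × ℤ).2 : ℂ)) ^ 6

/-- Klein's modular `j`-invariant, `j = 1728 g₂³ / (g₂³ - 27 g₃²)`. -/
noncomputable def jInv (z : ℂ) : ℂ :=
  1728 * g2 z ^ 3 / (g2 z ^ 3 - 27 * g3 z ^ 2)

/-- `τ` is an imaginary quadratic point of the upper half-plane. -/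
def IsImagQuad (τ : ℂ) : Prop :=
  0 < τ.im ∧ ∃ a b c : ℤ, a ≠ 0 ∧ (a : ℂ) * τ ^ 2 + (b : ℂ) * τ + (c : ℂ) = 0

/-- `Δ` is the discriminant of the CM order `End⟨τ,1⟩`: equivalently (and this is the standard
characterization), `Δ = b² - 4ac` where `aτ² + bτ + c = 0` with `a > 0`, `gcd(a,b,c) = 1`. -/
def IsDiscOf (Δ : ℤ) (τ : ℂ) : Prop :=
  ∃ a b c : ℤ, 0 < a ∧ Int.gcd a (Int.gcd b c) = 1 ∧
    (a : ℂ) * τ ^ 2 + (b : ℂ) * τ + (c : ℂ) = 0 ∧ Δ = b ^ 2 - 4 * a * c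

/-- The set `T_Δ` of reduced primitive integral triples of discriminant `Δ`. -/
def Tset (Δ : ℤ) : Set (ℤ × ℤ × ℤ) :=
  {t | Int.gcd t.1 (Int.gcd t.2.1 t.2.2) = 1 ∧ t.2.1 ^ 2 - 4 * t.1 * t.2.2 = Δ ∧
    ((-t.1 < t.2.1 ∧ t.2.1 ≤ t.1 ∧ t.1 < t.2.2) ∨ (0 ≤ t.2.1 ∧ t.2.1 ≤ t.1 ∧ t.1 = t.2.2))}

/-- The class number `h(Δ)`, i.e. the cardinality of `T_Δ`. -/
noncomputable def classNumber (Δ : ℤ) : ℕ := (Tset Δ).ncard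

/-- The point `τ(a,b,c) = (b + √Δ)/(2a)` (here `√Δ = i·√|Δ|` since `Δ < 0`). -/
noncomputable def tauOf (Δ a b : ℤ) : ℂ :=
  ((b : ℂ) + Complex.I * (Real.sqrt (-(Δ : ℝ)) : ℝ)) / (2 * (a : ℂ))

/-- The standard fundamental domain `𝔇`: the open hyperbolic triangle with vertices
`ζ₃`, `ζ₆`, `∞`, together with the geodesics joining `ζ₆` to `i` and to `∞`. -/
def fundDomain : Set ℂ :=
  {z | 0 < z.im ∧
    ((1 < ‖z‖ ∧ -(1 / 2) < z.re ∧ z.re < 1 / 2) ∨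
     (‖z‖ = 1 ∧ 0 ≤ z.re ∧ z.re ≤ 1 / 2) ∨
     (z.re = 1 / 2 ∧ 1 ≤ ‖z‖))}

/-- The right half `𝔇⁺ = {z ∈ 𝔇 : Re z ≥ 0}` of the fundamental domain. -/
def fundDomainPlus : Set ℂ := {z ∈ fundDomain | 0 ≤ z.re}

/-- `ζ₆ = (1 + √-3)/2`. -/
noncomputable def zeta6 : ℂ := (1 + Complex.I * (Real.sqrt 3 : ℝ)) / 2

theorem tauOf_mem_fundDomain (Δ : ℤ) (hΔ : Δ < 0) (hd : Δ % 4 = 0 ∨ Δ % 4 = 1)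
    (a b c : ℤ) (h : (a, b, c) ∈ Tset Δ) :
    tauOf Δ a b ∈ fundDomain := by
  obtain ⟨hg, hdisc, hcase⟩ := h
  simp only at hg hdisc hcase
  -- a > 0
  have ha : 0 < a := by
    rcases hcase with ⟨h1, h2, h3⟩ | ⟨h1, h2, h3⟩
    · linarith
    · nlinarith [sq_nonneg b]
  have haR : (0:ℝ) < (a:ℝ) := by exact_mod_cast ha
  have hc : 0 < c := by
    rcases hcase with ⟨h1, h2, h3⟩ | ⟨h1, h2, h3⟩
    · linarith
    · omega
  set s : ℝ := Real.sqrt (-(Δ:ℝ)) with hs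
  have hΔR : (0:ℝ) < -(Δ:ℝ) := by
    have : (Δ:ℝ) < 0 := by exact_mod_cast hΔ
    linarith
  have hspos : 0 < s := Real.sqrt_pos.mpr hΔR
  have hs2 : s ^ 2 = 4*(a:ℝ)*(c:ℝ) - (b:ℝ)^2 := by
    rw [hs, Real.sq_sqrt hΔR.le]
    have : ((b:ℝ)^2 - 4*(a:ℝ)*(c:ℝ)) = ((Δ:ℤ):ℝ) := by exact_mod_cast congrArg (Int.cast : ℤ → ℝ) hdisc
    linarith
  have h2a : (2*(a:ℂ)) ≠ 0 := by
    simp only [ne_eq, mul_eq_zero]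
    push_neg
    exact ⟨two_ne_zero, by exact_mod_cast ha.ne'⟩
  have key : tauOf Δ a b = (((b:ℝ)/(2*(a:ℝ)) : ℝ) : ℂ) + Complex.I * (((s/(2*(a:ℝ))) : ℝ) : ℂ) := by
    rw [tauOf]
    push_cast
    field_simp
    rw [hs]
  have hre : (tauOf Δ a b).re = (b:ℝ)/(2*(a:ℝ)) := by
    rw [key]
    simp only [Complex.add_re, Complex.ofReal_re, Complex.mul_re, Complex.I_re,
      Complex.I_im, Complex.ofReal_im]
    ring
  have him : (tauOf Δ a b).im = s/(2*(a:ℝ)) := by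
    rw [key]
    simp only [Complex.add_im, Complex.ofReal_im, Complex.mul_im, Complex.I_re,
      Complex.I_im, Complex.ofReal_re, Complex.ofReal_im]
    ring
  have habs2 : ‖tauOf Δ a b‖^2 = (c:ℝ)/(a:ℝ) := by
    rw [Complex.sq_norm, Complex.normSq_apply, hre, him]
    field_simp
    nlinarith [hs2]
  have habsnn : 0 ≤ ‖tauOf Δ a b‖ := norm_nonneg _
  have himpos : 0 < (tauOf Δ a b).im := by
    rw [him]; positivity
  refine ⟨himpos, ?_⟩
  rcases hcase with ⟨h1, h2, h3⟩ | ⟨h1, h2, h3⟩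
  · -- -a < b ≤ a, a < c
    have hca : 1 < (c:ℝ)/(a:ℝ) := by
      rw [lt_div_iff₀ haR]
      have : (a:ℝ) < (c:ℝ) := by exact_mod_cast h3
      linarith
    have habs1 : 1 < ‖tauOf Δ a b‖ := by
      nlinarith [habs2]
    rcases lt_or_eq_of_le h2 with hba | hba
    · left
      refine ⟨habs1, ?_, ?_⟩
      · rw [hre, neg_lt, ← neg_div]
        rw [div_lt_iff₀ (by linarith : (0:ℝ) < 2*(a:ℝ))]
        have : -(a:ℝ) < (b:ℝ) := by exact_mod_cast h1
        linarith
      · rw [hre, div_lt_iff₀ (by linarith : (0:ℝ) < 2*(a:ℝ))]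
        have : (b:ℝ) < (a:ℝ) := by exact_mod_cast hba
        linarith
    · right; right
      constructor
      · rw [hre, hba, div_eq_div_iff (by linarith : (2*(a:ℝ)) ≠ 0) (by norm_num : (2:ℝ) ≠ 0)]
        ring
      · linarith
  · -- 0 ≤ b ≤ a = c
    right; left
    have hca : (c:ℝ)/(a:ℝ) = 1 := by
      rw [div_eq_one_iff_eq haR.ne']
      exact_mod_cast h3.symm
    refine ⟨?_, ?_, ?_⟩
    · nlinarith [habs2, hca]
    · rw [hre]
      have : (0:ℝ) ≤ (b:ℝ) := by exact_mod_cast h1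
      positivity
    · rw [hre, div_le_iff₀ (by linarith : (0:ℝ) < 2*(a:ℝ))]
      have : (b:ℝ) ≤ (a:ℝ) := by exact_mod_cast h2
      linarith
end

section
/- Let Δ < 0 be a discriminant with Δ ≠ −3, let (a,b,c) ∈ T_Δ and set τ = (b + √Δ)/(2a); assume τ lies in 𝔇⁺ (the right half of the standard fundamental domain) and let ζ₆ = (1+√−3)/2. Then |τ − ζ₆| ≥ √3/(4|Δ|). -/
open Complex Polynomial

set_option maxHeartbeats 1000000 in
theorem tau_far_from_zeta6 (Δ : ℤ) (hΔ : Δ < 0) (hΔ3 : Δ ≠ -3)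
    (a b c : ℤ) (h : (a, b, c) ∈ Tset Δ)
    (hplus : tauOf Δ a b ∈ fundDomainPlus) :
    Real.sqrt 3 / (4 * |(Δ : ℝ)|) ≤ ‖tauOf Δ a b - zeta6‖ := by
  obtain ⟨hgcd, hdisc, hred⟩ := h
  simp only at hgcd hdisc hred
  -- basic integer facts
  have ha : 0 < a := by
    rcases hred with ⟨h1, h2, h3⟩ | ⟨h1, h2, h3⟩
    · linarith
    · rcases lt_or_ge 0 a with h | h
      · exact h
      · exfalso; nlinarith [sq_nonneg b]
  have hb2 : b ^ 2 ≤ a ^ 2 := by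
    rcases hred with ⟨h1, h2, h3⟩ | ⟨h1, h2, h3⟩ <;> nlinarith
  have hca : a ≤ c := by
    rcases hred with ⟨h1, h2, h3⟩ | ⟨h1, h2, h3⟩ <;> omega
  have h3a : 3 * a ^ 2 ≤ -Δ := by nlinarith
  have hΔ1 : 1 ≤ -Δ := by nlinarith
  -- real abbreviations (as plain terms)
  have hA0 : (0 : ℝ) < (a : ℝ) := by exact_mod_cast ha
  have hA1 : (1 : ℝ) ≤ (a : ℝ) := by exact_mod_cast ha
  have hD0 : (0 : ℝ) < -(Δ : ℝ) := by
    have : (Δ : ℝ) < 0 := by exact_mod_cast hΔ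
    linarith
  have hD1 : (1 : ℝ) ≤ -(Δ : ℝ) := by
    have : ((1 : ℤ) : ℝ) ≤ ((-Δ : ℤ) : ℝ) := by exact_mod_cast hΔ1
    push_cast at this; linarith
  have h3AD : 3 * (a : ℝ) ^ 2 ≤ -(Δ : ℝ) := by
    have : ((3 * a ^ 2 : ℤ) : ℝ) ≤ ((-Δ : ℤ) : ℝ) := by exact_mod_cast h3a
    push_cast at this; linarith
  have hs0 : 0 < Real.sqrt (-(Δ : ℝ)) := Real.sqrt_pos.2 hD0
  have hs2 : Real.sqrt (-(Δ : ℝ)) ^ 2 = -(Δ : ℝ) := Real.sq_sqrt hD0.le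
  have ht0 : 0 < Real.sqrt 3 := Real.sqrt_pos.2 (by norm_num)
  have ht2 : Real.sqrt 3 ^ 2 = 3 := Real.sq_sqrt (by norm_num)
  have hAts : (a : ℝ) * Real.sqrt 3 ≤ Real.sqrt (-(Δ : ℝ)) := by
    nlinarith [sq_nonneg (Real.sqrt (-(Δ : ℝ)) - (a : ℝ) * Real.sqrt 3),
      sq_nonneg (Real.sqrt (-(Δ : ℝ)) + (a : ℝ) * Real.sqrt 3)]
  have hsD : Real.sqrt (-(Δ : ℝ)) ≤ -(Δ : ℝ) := by nlinarith
  have hts : Real.sqrt 3 ≤ Real.sqrt (-(Δ : ℝ)) := by nlinarith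
  -- decompose τ - ζ₆
  have hτ : tauOf Δ a b =
      (((b : ℝ) / (2 * (a : ℝ)) : ℝ) : ℂ) +
      ((Real.sqrt (-(Δ : ℝ)) / (2 * (a : ℝ)) : ℝ) : ℂ) * Complex.I := by
    rw [tauOf]
    have h2a : (2 * (a : ℂ)) ≠ 0 := by
      simp only [ne_eq, mul_eq_zero]
      push_neg
      exact ⟨by norm_num, by exact_mod_cast ha.ne'⟩
    field_simp
    push_cast
    ring
  have hζ : zeta6 = (((1 : ℝ) / 2 : ℝ) : ℂ) + ((Real.sqrt 3 / 2 : ℝ) : ℂ) * Complex.I := by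
    rw [zeta6]; push_cast; ring
  have hre : (tauOf Δ a b - zeta6).re = ((b : ℝ) - (a : ℝ)) / (2 * (a : ℝ)) := by
    rw [hτ, hζ]
    simp only [Complex.sub_re, Complex.add_re, Complex.ofReal_re, Complex.mul_re,
      Complex.ofReal_im, Complex.I_re, Complex.I_im]
    field_simp
    ring
  have him : (tauOf Δ a b - zeta6).im =
      (Real.sqrt (-(Δ : ℝ)) - Real.sqrt 3 * (a : ℝ)) / (2 * (a : ℝ)) := by
    rw [hτ, hζ]
    simp only [Complex.sub_im, Complex.add_im, Complex.ofReal_im, Complex.mul_im,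
      Complex.ofReal_re, Complex.I_re, Complex.I_im]
    field_simp
    ring
  have habsΔ : |(Δ : ℝ)| = -(Δ : ℝ) :=
    abs_of_neg (by exact_mod_cast hΔ)
  rw [habsΔ]
  rcases eq_or_ne b a with hba | hba
  · -- b = a : use the imaginary part
    have hc : a < c := by
      rcases hred with ⟨h1, h2, h3⟩ | ⟨h1, h2, h3⟩
      · exact h3
      · exfalso
        have hac : c = a := h3.symm
        have hgcd' : Int.gcd a (Int.gcd b c) = a.natAbs := by
          rw [hba, hac, Int.gcd_self]
          simp [Int.gcd, Int.natAbs_abs]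
        have ha1 : a = 1 := by
          have := hgcd'.symm.trans hgcd
          omega
        apply hΔ3
        rw [← hdisc, hba, hac, ha1]
        ring
    have hkey : 4 * a ≤ -Δ - 3 * a ^ 2 := by nlinarith
    have hkeyR : 4 * (a : ℝ) ≤ -(Δ : ℝ) - 3 * (a : ℝ) ^ 2 := by
      have : ((4 * a : ℤ) : ℝ) ≤ ((-Δ - 3 * a ^ 2 : ℤ) : ℝ) := by exact_mod_cast hkey
      push_cast at this; linarith
    have ht2A : Real.sqrt 3 ^ 2 * (a : ℝ) ^ 2 = 3 * (a : ℝ) ^ 2 := by rw [ht2]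
    have hstA : 2 * (a : ℝ) ≤
        (Real.sqrt (-(Δ : ℝ)) - Real.sqrt 3 * (a : ℝ)) * Real.sqrt (-(Δ : ℝ)) := by
      nlinarith [sq_nonneg (Real.sqrt (-(Δ : ℝ)) - Real.sqrt 3 * (a : ℝ)), hkeyR, hs2, ht2A]
    calc Real.sqrt 3 / (4 * -(Δ : ℝ))
        ≤ (tauOf Δ a b - zeta6).im := by
          rw [him, div_le_div_iff₀ (by linarith) (by linarith)]
          have hDs : -(Δ : ℝ) = Real.sqrt (-(Δ : ℝ)) ^ 2 := hs2.symm
          nth_rewrite 2 [hDs]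
          have e1 := mul_le_mul_of_nonneg_left hstA
            (by positivity : (0 : ℝ) ≤ 4 * Real.sqrt (-(Δ : ℝ)))
          have e2 := mul_le_mul_of_nonneg_right hts (by linarith : (0 : ℝ) ≤ 2 * (a : ℝ))
          have e3 : 0 ≤ (a : ℝ) * Real.sqrt (-(Δ : ℝ)) := by positivity
          nlinarith [e1, e2, e3]
      _ ≤ |(tauOf Δ a b - zeta6).im| := le_abs_self _
      _ ≤ ‖tauOf Δ a b - zeta6‖ := Complex.abs_im_le_norm _
  · -- b ≠ a : use the real part
    have hba1 : (1 : ℤ) ≤ |b - a| :=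
      Int.one_le_abs (sub_ne_zero.2 hba)
    have hbaR : (1 : ℝ) ≤ |(b : ℝ) - (a : ℝ)| := by
      have : ((1 : ℤ) : ℝ) ≤ ((|b - a| : ℤ) : ℝ) := by exact_mod_cast hba1
      push_cast at this; convert this using 2
    calc Real.sqrt 3 / (4 * -(Δ : ℝ))
        ≤ 1 / (2 * (a : ℝ)) := by
          rw [div_le_div_iff₀ (by linarith) (by linarith)]
          nlinarith [hAts, hsD]
      _ ≤ |(b : ℝ) - (a : ℝ)| / (2 * (a : ℝ)) := by gcongr
      _ = |(tauOf Δ a b - zeta6).re| := by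
          rw [hre, abs_div, abs_of_pos (by linarith : (0:ℝ) < 2 * (a:ℝ))]
      _ ≤ ‖tauOf Δ a b - zeta6‖ := Complex.abs_re_le_norm _
end

section
/- Let Δ < 0 be a discriminant with Δ ∉ {−3, −4}. If the class numbers satisfy h(4Δ) = h(Δ), then Δ ≡ 1 (mod 8). -/
open Complex Polynomial

-- helper: no common prime divisor
lemma no_common_prime {a b c : ℤ} (hg : Int.gcd a (Int.gcd b c) = 1) {p : ℕ} (hp : p.Prime)
    (h1 : (p:ℤ) ∣ a) (h2 : (p:ℤ) ∣ b) (h3 : (p:ℤ) ∣ c) : False := by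
  have hbc : (p:ℤ) ∣ (Int.gcd b c : ℤ) := Int.dvd_coe_gcd h2 h3
  have habc : (p:ℤ) ∣ (Int.gcd a (Int.gcd b c) : ℤ) := Int.dvd_coe_gcd h1 hbc
  rw [hg] at habc
  have : p ∣ 1 := by exact_mod_cast habc
  exact hp.one_lt.ne' (Nat.dvd_one.mp this)

lemma gcd3_prime {a b c : ℤ}
    (H : ∀ p : ℕ, p.Prime → (p:ℤ) ∣ a → (p:ℤ) ∣ b → (p:ℤ) ∣ c → False) :
    Int.gcd a (Int.gcd b c) = 1 := by
  by_contra hne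
  obtain ⟨p, pp, pd⟩ := Nat.exists_prime_and_dvd hne
  have h1 : (p:ℤ) ∣ a := dvd_trans (Int.natCast_dvd_natCast.mpr pd) (Int.gcd_dvd_left _ _)
  have hbc : (p:ℤ) ∣ (Int.gcd b c : ℤ) :=
    dvd_trans (Int.natCast_dvd_natCast.mpr pd) (Int.gcd_dvd_right _ _)
  exact H p pp h1 (dvd_trans hbc (Int.gcd_dvd_left _ _)) (dvd_trans hbc (Int.gcd_dvd_right _ _))

lemma prime_dvd_halve {p : ℕ} (hp : p.Prime) (hp2 : p ≠ 2) {x : ℤ} (h : (p:ℤ) ∣ 2*x) :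
    (p:ℤ) ∣ x := by
  rcases (Nat.prime_iff_prime_int.mp hp).dvd_mul.mp h with h' | h'
  · exfalso
    have : p ∣ 2 := by exact_mod_cast h'
    exact hp2 ((Nat.prime_dvd_prime_iff_eq hp Nat.prime_two).mp this)
  · exact h'

lemma sq_mod8 {b : ℤ} (hb : b % 2 = 1) : b^2 % 8 = 1 := by
  obtain ⟨k, hk⟩ : ∃ k, b = 2*k+1 := ⟨(b-1)/2, by omega⟩
  have h2 : b^2 = 4*(k*(k+1)) + 1 := by rw [hk]; ring
  rcases Int.even_mul_succ_self k with ⟨m, hm⟩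
  omega

/-- Basic bounds for members of `Tset`. -/
lemma Tmem0 {Δ : ℤ} (hΔ : Δ < 0) {a b c : ℤ} (h : (a,b,c) ∈ Tset Δ) :
    1 ≤ a ∧ -a < b ∧ b ≤ a ∧ a ≤ c ∧ b^2 - 4*a*c = Δ ∧ Int.gcd a (Int.gcd b c) = 1 := by
  have h' : Int.gcd a (Int.gcd b c) = 1 ∧ b ^ 2 - 4 * a * c = Δ ∧
      ((-a < b ∧ b ≤ a ∧ a < c) ∨ (0 ≤ b ∧ b ≤ a ∧ a = c)) := h
  clear h
  obtain ⟨hg, hdisc, hred⟩ := h'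
  have ha1 : 1 ≤ a := by
    rcases hred with ⟨h1,h2,h3⟩|⟨h1,h2,h3⟩
    · omega
    · by_contra hle
      have hb0 : b = 0 := by omega
      have ha0 : a = 0 := by omega
      rw [hb0, ha0] at hdisc
      norm_num at hdisc
      omega
  rcases hred with ⟨h1,h2,h3⟩|⟨h1,h2,h3⟩ <;>
    exact ⟨ha1, by omega, by omega, by omega, hdisc, hg⟩

/-- Under `Δ % 8 ≠ 1`, `a` even forces `c` odd. -/
lemma Tmem_odd {Δ : ℤ} (hΔ : Δ < 0) (hbad : Δ % 8 ≠ 1) {a b c : ℤ}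
    (h : (a,b,c) ∈ Tset Δ) (hae : a % 2 = 0) : c % 2 = 1 := by
  obtain ⟨_, _, _, _, hdisc, hg⟩ := Tmem0 hΔ h
  by_contra hce
  have hco : c % 2 = 0 := by omega
  have hbodd : b % 2 = 1 := by
    by_contra hbe
    exact no_common_prime hg Nat.prime_two
      (by push_cast; omega) (by push_cast; omega) (by push_cast; omega)
  obtain ⟨a', ha'⟩ : ∃ a', a = 2*a' := ⟨a/2, by omega⟩
  obtain ⟨c', hc'⟩ : ∃ c', c = 2*c' := ⟨c/2, by omega⟩
  have h16 : 4*a*c = 16*(a'*c') := by rw [ha', hc']; ring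
  have hb8 := sq_mod8 hbodd
  omega

lemma Tset_finite {Δ : ℤ} (hΔ : Δ < 0) : (Tset Δ).Finite := by
  apply Set.Finite.subset
    (((Set.finite_Icc (1:ℤ) (Δ^2)).prod
      ((Set.finite_Icc (-(Δ^2)) (Δ^2)).prod (Set.finite_Icc (1:ℤ) (Δ^2)))))
  rintro ⟨a,b,c⟩ h
  obtain ⟨ha1, hba, hab, hac, hd, -⟩ := Tmem0 hΔ h
  have hbb : b^2 ≤ a^2 := by
    nlinarith [mul_nonneg (show (0:ℤ) ≤ a - b by omega) (show (0:ℤ) ≤ a + b by omega)]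
  have haac : a^2 ≤ a*c := by nlinarith [mul_nonneg (show (0:ℤ) ≤ a by omega) (show (0:ℤ) ≤ c - a by omega)]
  have h3a : 3*a^2 ≤ -Δ := by nlinarith
  have hsq : -Δ ≤ Δ^2 := by nlinarith [mul_nonneg (show (0:ℤ) ≤ -Δ by omega) (show (0:ℤ) ≤ -Δ-1 by omega)]
  have haΔ : a ≤ Δ^2 := by nlinarith [mul_nonneg (show (0:ℤ) ≤ a by omega) (show (0:ℤ) ≤ 3*a-1 by omega)]
  have hcΔ : c ≤ Δ^2 := by
    have h4c : 4*c ≤ 4*a*c := by nlinarith [mul_nonneg (show (0:ℤ) ≤ c by omega) (show (0:ℤ) ≤ a-1 by omega)]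
    nlinarith
  exact ⟨Set.mem_Icc.mpr ⟨ha1, haΔ⟩,
    Set.mem_Icc.mpr ⟨show -(Δ^2) ≤ b by omega, show b ≤ Δ^2 by omega⟩,
    Set.mem_Icc.mpr ⟨show (1:ℤ) ≤ c by omega, hcΔ⟩⟩

lemma mem_Tset_mk {Δ A B C : ℤ} (hg : Int.gcd A (Int.gcd B C) = 1)
    (hd : B^2 - 4*A*C = Δ)
    (hred : (-A < B ∧ B ≤ A ∧ A < C) ∨ (0 ≤ B ∧ B ≤ A ∧ A = C)) :
    (A,B,C) ∈ Tset Δ := ⟨hg, hd, hred⟩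

/-- The explicit injection from `T_Δ` into `T_{4Δ}` (valid when `Δ % 8 ≠ 1`). -/
def iota (t : ℤ × ℤ × ℤ) : ℤ × ℤ × ℤ :=
  if t.1 % 2 = 0 then
    if 4 * t.1 < t.2.2 then (4 * t.1, 2 * t.2.1, t.2.2)
    else if 2 * t.2.1 ≤ -t.2.2 then (t.2.2, 2*t.2.1 + 2*t.2.2, 4*t.1 + 2*t.2.1 + t.2.2)
    else if 2 * t.2.1 ≤ t.2.2 then (t.2.2, 2*t.2.1, 4*t.1)
    else (t.2.2, 2*t.2.1 - 2*t.2.2, 4*t.1 - 2*t.2.1 + t.2.2)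
  else
    if 2 * t.2.1 ≤ -t.1 then (t.1, 2*t.2.1 + 2*t.1, 4*t.2.2 + 2*t.2.1 + t.1)
    else if 2 * t.2.1 ≤ t.1 then (t.1, 2*t.2.1, 4*t.2.2)
    else (t.1, 2*t.2.1 - 2*t.1, 4*t.2.2 - 2*t.2.1 + t.1)

lemma iota_mem {Δ : ℤ} (hΔ : Δ < 0) (hbad : Δ % 8 ≠ 1) {t : ℤ × ℤ × ℤ}
    (ht : t ∈ Tset Δ) : iota t ∈ Tset (4 * Δ) := by
  obtain ⟨a, b, c⟩ := t
  obtain ⟨ha1, hba, hab, hac, hd, hg⟩ := Tmem0 hΔ ht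
  show iota (a, b, c) ∈ Tset (4 * Δ)
  rw [iota]
  split_ifs with h1 h2 h3 h4 h2' h3' <;> dsimp only at *
  -- even, far: (4a, 2b, c)
  · have hc1 : c % 2 = 1 := Tmem_odd hΔ hbad ht h1
    refine mem_Tset_mk ?_ ?_ (Or.inl ⟨by omega, by omega, by omega⟩)
    · refine gcd3_prime fun p pp hp1 hp2 hp3 => ?_
      have hp2' : p ≠ 2 := by
        rintro rfl
        obtain ⟨k, hk⟩ := hp3
        push_cast at hk; omega
      have hpa : (p:ℤ) ∣ a := prime_dvd_halve pp hp2' (prime_dvd_halve pp hp2'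
        (by convert hp1 using 1; ring))
      exact no_common_prime hg pp hpa (prime_dvd_halve pp hp2' hp2) hp3
    · linear_combination 4 * hd
  -- even, near, sub3: (c, 2b+2c, 4a+2b+c)
  · have hc1 : c % 2 = 1 := Tmem_odd hΔ hbad ht h1
    refine mem_Tset_mk ?_ ?_ (Or.inl ⟨by omega, by omega, by omega⟩)
    · refine gcd3_prime fun p pp hp1 hp2 hp3 => ?_
      have hp2' : p ≠ 2 := by
        rintro rfl
        obtain ⟨k, hk⟩ := hp1
        push_cast at hk; omega
      have hpb : (p:ℤ) ∣ b := by
        refine prime_dvd_halve pp hp2' ?_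
        have := hp2.sub (hp1.mul_left 2)
        convert this using 1; rfl; ring
      have hpa : (p:ℤ) ∣ a := by
        refine prime_dvd_halve pp hp2' (prime_dvd_halve pp hp2' ?_)
        have := (hp3.sub (hpb.mul_left 2)).sub hp1
        convert this using 1; rfl; ring
      exact no_common_prime hg pp hpa hpb hp1
    · linear_combination 4 * hd
  -- even, near, id: (c, 2b, 4a)
  · have hc1 : c % 2 = 1 := Tmem_odd hΔ hbad ht h1
    refine mem_Tset_mk ?_ ?_ (Or.inl ⟨by omega, by omega, by omega⟩)
    · refine gcd3_prime fun p pp hp1 hp2 hp3 => ?_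
      have hp2' : p ≠ 2 := by
        rintro rfl
        obtain ⟨k, hk⟩ := hp1
        push_cast at hk; omega
      have hpa : (p:ℤ) ∣ a := prime_dvd_halve pp hp2' (prime_dvd_halve pp hp2'
        (by convert hp3 using 1; ring))
      exact no_common_prime hg pp hpa (prime_dvd_halve pp hp2' hp2) hp1
    · linear_combination 4 * hd
  -- even, near, sub2: (c, 2b-2c, 4a-2b+c)
  · have hc1 : c % 2 = 1 := Tmem_odd hΔ hbad ht h1
    refine mem_Tset_mk ?_ ?_ (Or.inl ⟨by omega, by omega, by omega⟩)
    · refine gcd3_prime fun p pp hp1 hp2 hp3 => ?_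
      have hp2' : p ≠ 2 := by
        rintro rfl
        obtain ⟨k, hk⟩ := hp1
        push_cast at hk; omega
      have hpb : (p:ℤ) ∣ b := by
        refine prime_dvd_halve pp hp2' ?_
        have := hp2.add (hp1.mul_left 2)
        convert this using 1; rfl; ring
      have hpa : (p:ℤ) ∣ a := by
        refine prime_dvd_halve pp hp2' (prime_dvd_halve pp hp2' ?_)
        have := (hp3.add (hpb.mul_left 2)).sub hp1
        convert this using 1; rfl; ring
      exact no_common_prime hg pp hpa hpb hp1
    · linear_combination 4 * hd
  -- odd, sub3: (a, 2b+2a, 4c+2b+a)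
  · refine mem_Tset_mk ?_ ?_ (Or.inl ⟨by omega, by omega, by omega⟩)
    · refine gcd3_prime fun p pp hp1 hp2 hp3 => ?_
      have hp2' : p ≠ 2 := by
        rintro rfl
        obtain ⟨k, hk⟩ := hp1
        push_cast at hk; omega
      have hpb : (p:ℤ) ∣ b := by
        refine prime_dvd_halve pp hp2' ?_
        have := hp2.sub (hp1.mul_left 2)
        convert this using 1; rfl; ring
      have hpc : (p:ℤ) ∣ c := by
        refine prime_dvd_halve pp hp2' (prime_dvd_halve pp hp2' ?_)
        have := (hp3.sub (hpb.mul_left 2)).sub hp1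
        convert this using 1; rfl; ring
      exact no_common_prime hg pp hp1 hpb hpc
    · linear_combination 4 * hd
  -- odd, id: (a, 2b, 4c)
  · refine mem_Tset_mk ?_ ?_ (Or.inl ⟨by omega, by omega, by omega⟩)
    · refine gcd3_prime fun p pp hp1 hp2 hp3 => ?_
      have hp2' : p ≠ 2 := by
        rintro rfl
        obtain ⟨k, hk⟩ := hp1
        push_cast at hk; omega
      have hpc : (p:ℤ) ∣ c := prime_dvd_halve pp hp2' (prime_dvd_halve pp hp2'
        (by convert hp3 using 1; ring))
      exact no_common_prime hg pp hp1 (prime_dvd_halve pp hp2' hp2) hpc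
    · linear_combination 4 * hd
  -- odd, sub2: (a, 2b-2a, 4c-2b+a)
  · refine mem_Tset_mk ?_ ?_ (Or.inl ⟨by omega, by omega, by omega⟩)
    · refine gcd3_prime fun p pp hp1 hp2 hp3 => ?_
      have hp2' : p ≠ 2 := by
        rintro rfl
        obtain ⟨k, hk⟩ := hp1
        push_cast at hk; omega
      have hpb : (p:ℤ) ∣ b := by
        refine prime_dvd_halve pp hp2' ?_
        have := hp2.add (hp1.mul_left 2)
        convert this using 1; rfl; ring
      have hpc : (p:ℤ) ∣ c := by
        refine prime_dvd_halve pp hp2' (prime_dvd_halve pp hp2' ?_)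
        have := (hp3.add (hpb.mul_left 2)).sub hp1
        convert this using 1; rfl; ring
      exact no_common_prime hg pp hp1 hpb hpc
    · linear_combination 4 * hd

lemma iota_injOn {Δ : ℤ} (hΔ : Δ < 0) (hbad : Δ % 8 ≠ 1) :
    Set.InjOn iota (Tset Δ) := by
  rintro ⟨a₁, b₁, c₁⟩ h₁ ⟨a₂, b₂, c₂⟩ h₂ he
  obtain ⟨ha1, hba1, hab1, hac1, hd1, -⟩ := Tmem0 hΔ h₁
  obtain ⟨ha2, hba2, hab2, hac2, hd2, -⟩ := Tmem0 hΔ h₂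
  have hodd1 : a₁ % 2 = 0 → c₁ % 2 = 1 := Tmem_odd hΔ hbad h₁
  have hodd2 : a₂ % 2 = 0 → c₂ % 2 = 1 := Tmem_odd hΔ hbad h₂
  simp only [iota] at he
  split_ifs at he <;>
    (simp only [Prod.mk.injEq] at he ⊢; omega)

lemma key {Δ : ℤ} (hΔ : Δ < 0) (hbad : Δ % 8 ≠ 1) {t₀ : ℤ × ℤ × ℤ}
    (h₀ : t₀ ∈ Tset (4 * Δ)) (h₀A : t₀.1 = 4) :
    classNumber Δ < classNumber (4 * Δ) := by
  have h4Δ : 4 * Δ < 0 := by omega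
  have hfin4 : (Tset (4 * Δ)).Finite := Tset_finite h4Δ
  set S : Set (ℤ × ℤ × ℤ) := iota '' Tset Δ with hS
  have hSsub : S ⊆ Tset (4 * Δ) := by
    rintro t ⟨u, hu, rfl⟩
    exact iota_mem hΔ hbad hu
  have hSfin : S.Finite := hfin4.subset hSsub
  have hmiss : t₀ ∉ S := by
    rintro ⟨⟨a, b, c⟩, hu, ht⟩
    obtain ⟨ha1, hba, hab, hac, hd, -⟩ := Tmem0 hΔ hu
    have hodd : a % 2 = 0 → c % 2 = 1 := Tmem_odd hΔ hbad hu
    have h1 := congrArg Prod.fst ht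
    rw [h₀A] at h1
    simp only [iota] at h1
    split_ifs at h1 <;> simp only at h1 <;> omega
  have h1 : (Tset Δ).ncard = S.ncard := (Set.ncard_image_of_injOn (iota_injOn hΔ hbad)).symm
  have h2 : (insert t₀ S).ncard = S.ncard + 1 := Set.ncard_insert_of_notMem hmiss hSfin
  have h3 : (insert t₀ S).ncard ≤ (Tset (4 * Δ)).ncard :=
    Set.ncard_le_ncard (Set.insert_subset h₀ hSsub) hfin4
  show (Tset Δ).ncard < (Tset (4*Δ)).ncard
  omega

lemma Tmem_sq {Δ : ℤ} (hΔ : Δ < 0) {a b c : ℤ} (h : (a,b,c) ∈ Tset Δ) :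
    3*a^2 ≤ -Δ := by
  obtain ⟨ha1, hba, hab, hac, hd, -⟩ := Tmem0 hΔ h
  have hbb : b^2 ≤ a^2 := by
    nlinarith [mul_nonneg (show (0:ℤ) ≤ a - b by omega) (show (0:ℤ) ≤ a + b by omega)]
  have haac : a^2 ≤ a*c := by
    nlinarith [mul_nonneg (show (0:ℤ) ≤ a by omega) (show (0:ℤ) ≤ c - a by omega)]
  nlinarith

lemma Tmem_par {Δ : ℤ} (hΔ : Δ < 0) {a b c : ℤ} (h : (a,b,c) ∈ Tset Δ) :
    1 ≤ a % 2 + b % 2 + c % 2 := by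
  obtain ⟨-, -, -, -, -, hg⟩ := Tmem0 hΔ h
  by_contra hcon
  have h1 : a % 2 = 0 := by omega
  have h2 : b % 2 = 0 := by omega
  have h3 : c % 2 = 0 := by omega
  exact no_common_prime hg Nat.prime_two
    (by push_cast; omega) (by push_cast; omega) (by push_cast; omega)

lemma Tset_m8 : Tset (-8 : ℤ) = {((1:ℤ),(0:ℤ),(2:ℤ))} := by
  ext ⟨a,b,c⟩
  constructor
  · intro h
    have hcond : Int.gcd a (Int.gcd b c) = 1 ∧ b ^ 2 - 4 * a * c = (-8:ℤ) ∧
      ((-a < b ∧ b ≤ a ∧ a < c) ∨ (0 ≤ b ∧ b ≤ a ∧ a = c)) := h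
    obtain ⟨-, hd, hred⟩ := hcond
    obtain ⟨ha1, hba, hab, hac, -, -⟩ := Tmem0 (by norm_num) h
    have h3a : 3*a^2 ≤ 8 := Tmem_sq (by norm_num) h
    have hpar := Tmem_par (show (-8:ℤ) < 0 by norm_num) h
    have ha' : a ≤ 1 := by nlinarith [sq_nonneg (a-2)]
    simp only [Set.mem_singleton_iff, Prod.mk.injEq]
    rw [pow_two] at hd
    interval_cases a <;> interval_cases b <;> omega
  · rintro h
    simp only [Set.mem_singleton_iff, Prod.mk.injEq] at h
    obtain ⟨rfl, rfl, rfl⟩ := h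
    exact mem_Tset_mk (by decide) (by norm_num) (by norm_num)

lemma Tset_m32 : Tset (-32 : ℤ) = {((1:ℤ),(0:ℤ),(8:ℤ)), (3,2,3)} := by
  ext ⟨a,b,c⟩
  constructor
  · intro h
    have hcond : Int.gcd a (Int.gcd b c) = 1 ∧ b ^ 2 - 4 * a * c = (-32:ℤ) ∧
      ((-a < b ∧ b ≤ a ∧ a < c) ∨ (0 ≤ b ∧ b ≤ a ∧ a = c)) := h
    obtain ⟨-, hd, hred⟩ := hcond
    obtain ⟨ha1, hba, hab, hac, -, -⟩ := Tmem0 (by norm_num) h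
    have h3a : 3*a^2 ≤ 32 := Tmem_sq (by norm_num) h
    have hpar := Tmem_par (show (-32:ℤ) < 0 by norm_num) h
    have ha' : a ≤ 3 := by nlinarith [sq_nonneg (a-4)]
    simp only [Set.mem_insert_iff, Set.mem_singleton_iff, Prod.mk.injEq]
    rw [pow_two] at hd
    interval_cases a <;> interval_cases b <;> omega
  · intro h
    simp only [Set.mem_insert_iff, Set.mem_singleton_iff, Prod.mk.injEq] at h
    rcases h with ⟨rfl, rfl, rfl⟩ | ⟨rfl, rfl, rfl⟩
    · exact mem_Tset_mk (by decide) (by norm_num) (by norm_num)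
    · exact mem_Tset_mk (by decide) (by norm_num) (by norm_num)

lemma Tset_m11 : Tset (-11 : ℤ) = {((1:ℤ),(1:ℤ),(3:ℤ))} := by
  ext ⟨a,b,c⟩
  constructor
  · intro h
    have hcond : Int.gcd a (Int.gcd b c) = 1 ∧ b ^ 2 - 4 * a * c = (-11:ℤ) ∧
      ((-a < b ∧ b ≤ a ∧ a < c) ∨ (0 ≤ b ∧ b ≤ a ∧ a = c)) := h
    obtain ⟨-, hd, hred⟩ := hcond
    obtain ⟨ha1, hba, hab, hac, -, -⟩ := Tmem0 (by norm_num) h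
    have h3a : 3*a^2 ≤ 11 := Tmem_sq (by norm_num) h
    have hpar := Tmem_par (show (-11:ℤ) < 0 by norm_num) h
    have ha' : a ≤ 1 := by nlinarith [sq_nonneg (a-2)]
    simp only [Set.mem_singleton_iff, Prod.mk.injEq]
    rw [pow_two] at hd
    interval_cases a <;> interval_cases b <;> omega
  · intro h
    simp only [Set.mem_singleton_iff, Prod.mk.injEq] at h
    obtain ⟨rfl, rfl, rfl⟩ := h
    exact mem_Tset_mk (by decide) (by norm_num) (by norm_num)

lemma Tset_m44 : Tset (-44 : ℤ) = {((1:ℤ),(0:ℤ),(11:ℤ)), (3,2,4), (3,-2,4)} := by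
  ext ⟨a,b,c⟩
  constructor
  · intro h
    have hcond : Int.gcd a (Int.gcd b c) = 1 ∧ b ^ 2 - 4 * a * c = (-44:ℤ) ∧
      ((-a < b ∧ b ≤ a ∧ a < c) ∨ (0 ≤ b ∧ b ≤ a ∧ a = c)) := h
    obtain ⟨-, hd, hred⟩ := hcond
    obtain ⟨ha1, hba, hab, hac, -, -⟩ := Tmem0 (by norm_num) h
    have h3a : 3*a^2 ≤ 44 := Tmem_sq (by norm_num) h
    have hpar := Tmem_par (show (-44:ℤ) < 0 by norm_num) h
    have ha' : a ≤ 3 := by nlinarith [sq_nonneg (a-4)]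
    simp only [Set.mem_insert_iff, Set.mem_singleton_iff, Prod.mk.injEq]
    rw [pow_two] at hd
    interval_cases a <;> interval_cases b <;> omega
  · intro h
    simp only [Set.mem_insert_iff, Set.mem_singleton_iff, Prod.mk.injEq] at h
    rcases h with ⟨rfl, rfl, rfl⟩ | ⟨rfl, rfl, rfl⟩ | ⟨rfl, rfl, rfl⟩
    · exact mem_Tset_mk (by decide) (by norm_num) (by norm_num)
    · exact mem_Tset_mk (by decide) (by norm_num) (by norm_num)
    · exact mem_Tset_mk (by decide) (by norm_num) (by norm_num)

lemma Tset_m12 : Tset (-12 : ℤ) = {((1:ℤ),(0:ℤ),(3:ℤ))} := by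
  ext ⟨a,b,c⟩
  constructor
  · intro h
    have hcond : Int.gcd a (Int.gcd b c) = 1 ∧ b ^ 2 - 4 * a * c = (-12:ℤ) ∧
      ((-a < b ∧ b ≤ a ∧ a < c) ∨ (0 ≤ b ∧ b ≤ a ∧ a = c)) := h
    obtain ⟨-, hd, hred⟩ := hcond
    obtain ⟨ha1, hba, hab, hac, -, -⟩ := Tmem0 (by norm_num) h
    have h3a : 3*a^2 ≤ 12 := Tmem_sq (by norm_num) h
    have hpar := Tmem_par (show (-12:ℤ) < 0 by norm_num) h
    have ha' : a ≤ 2 := by nlinarith [sq_nonneg (a-3)]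
    simp only [Set.mem_singleton_iff, Prod.mk.injEq]
    rw [pow_two] at hd
    interval_cases a <;> interval_cases b <;> omega
  · intro h
    simp only [Set.mem_singleton_iff, Prod.mk.injEq] at h
    obtain ⟨rfl, rfl, rfl⟩ := h
    exact mem_Tset_mk (by decide) (by norm_num) (by norm_num)

lemma Tset_m48 : Tset (-48 : ℤ) = {((1:ℤ),(0:ℤ),(12:ℤ)), (3,0,4)} := by
  ext ⟨a,b,c⟩
  constructor
  · intro h
    have hcond : Int.gcd a (Int.gcd b c) = 1 ∧ b ^ 2 - 4 * a * c = (-48:ℤ) ∧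
      ((-a < b ∧ b ≤ a ∧ a < c) ∨ (0 ≤ b ∧ b ≤ a ∧ a = c)) := h
    obtain ⟨-, hd, hred⟩ := hcond
    obtain ⟨ha1, hba, hab, hac, -, -⟩ := Tmem0 (by norm_num) h
    have h3a : 3*a^2 ≤ 48 := Tmem_sq (by norm_num) h
    have hpar := Tmem_par (show (-48:ℤ) < 0 by norm_num) h
    have ha' : a ≤ 4 := by nlinarith [sq_nonneg (a-5)]
    simp only [Set.mem_insert_iff, Set.mem_singleton_iff, Prod.mk.injEq]
    rw [pow_two] at hd
    interval_cases a <;> interval_cases b <;> omega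
  · intro h
    simp only [Set.mem_insert_iff, Set.mem_singleton_iff, Prod.mk.injEq] at h
    rcases h with ⟨rfl, rfl, rfl⟩ | ⟨rfl, rfl, rfl⟩
    · exact mem_Tset_mk (by decide) (by norm_num) (by norm_num)
    · exact mem_Tset_mk (by decide) (by norm_num) (by norm_num)

lemma gcd_4bc {b c : ℤ} (hb : b % 2 = 0) (hc : c % 2 = 1) :
    Int.gcd 4 (Int.gcd b c) = 1 := by
  refine gcd3_prime fun p pp hp1 hp2 hp3 => ?_
  by_cases hp2' : p = 2
  · subst hp2'; obtain ⟨j, hj⟩ := hp3; push_cast at hj; omega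
  · have h4 : (p:ℤ) ∣ 2 * 2 := by rw [show ((2:ℤ) * 2) = 4 from by norm_num]; exact hp1
    have h2 : (p:ℤ) ∣ 2 := prime_dvd_halve pp hp2' h4
    have : p ∣ 2 := by exact_mod_cast h2
    exact hp2' ((Nat.prime_dvd_prime_iff_eq pp Nat.prime_two).mp this)

theorem disc_one_mod_eight_of_classNumber_eq (Δ : ℤ) (hΔ : Δ < 0)
    (hd : Δ % 4 = 0 ∨ Δ % 4 = 1) (h3 : Δ ≠ -3) (h4 : Δ ≠ -4)
    (h : classNumber (4 * Δ) = classNumber Δ) :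
    Δ % 8 = 1 := by
  by_contra hbad
  have h8 : Δ % 8 = 0 ∨ Δ % 8 = 4 ∨ Δ % 8 = 5 := by omega
  rcases h8 with h8 | h8 | h8
  · -- Δ ≡ 0 (mod 8)
    rcases (show Δ = -8 ∨ Δ ≤ -16 by omega) with rfl | hle
    · rw [show (4:ℤ) * -8 = -32 by norm_num] at h
      have e1 : classNumber (-8 : ℤ) = 1 := by
        rw [classNumber, Tset_m8, Set.ncard_singleton]
      have e2 : classNumber (-32 : ℤ) = 2 := by
        rw [classNumber, Tset_m32, Set.ncard_pair (by decide)]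
      omega
    · obtain ⟨k, hk⟩ : ∃ k, Δ = 8*k := ⟨Δ/8, by omega⟩
      have hkey := key hΔ hbad (t₀ := (4, 4, 1 - 2*k))
        (mem_Tset_mk (gcd_4bc (by norm_num) (by omega))
          (by rw [hk]; ring) (Or.inl ⟨by norm_num, by norm_num, by omega⟩)) rfl
      omega
  · -- Δ ≡ 4 (mod 8)
    rcases (show Δ = -4 ∨ Δ = -12 ∨ Δ ≤ -20 by omega) with rfl | rfl | hle
    · exact h4 rfl
    · rw [show (4:ℤ) * -12 = -48 by norm_num] at h
      have e1 : classNumber (-12 : ℤ) = 1 := by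
        rw [classNumber, Tset_m12, Set.ncard_singleton]
      have e2 : classNumber (-48 : ℤ) = 2 := by
        rw [classNumber, Tset_m48, Set.ncard_pair (by decide)]
      omega
    · obtain ⟨k, hk⟩ : ∃ k, Δ = 8*k + 4 := ⟨(Δ-4)/8, by omega⟩
      have hkey := key hΔ hbad (t₀ := (4, 0, -(2*k+1)))
        (mem_Tset_mk (gcd_4bc (by norm_num) (by omega))
          (by rw [hk]; ring) (Or.inl ⟨by norm_num, by norm_num, by omega⟩)) rfl
      omega
  · -- Δ ≡ 5 (mod 8)
    rcases (show Δ = -3 ∨ Δ = -11 ∨ Δ ≤ -19 by omega) with rfl | rfl | hle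
    · exact h3 rfl
    · rw [show (4:ℤ) * -11 = -44 by norm_num] at h
      have e1 : classNumber (-11 : ℤ) = 1 := by
        rw [classNumber, Tset_m11, Set.ncard_singleton]
      have e2 : classNumber (-44 : ℤ) = 3 := by
        rw [classNumber, Tset_m44,
          Set.ncard_insert_of_notMem (by norm_num) (Set.toFinite _),
          Set.ncard_pair (by decide)]
      omega
    · obtain ⟨k, hk⟩ : ∃ k, Δ = 8*k + 5 := ⟨(Δ-5)/8, by omega⟩
      have hkey := key hΔ hbad (t₀ := (4, 2, -(2*k+1)))
        (mem_Tset_mk (gcd_4bc (by norm_num) (by omega))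
          (by rw [hk]; ring) (Or.inl ⟨by norm_num, by norm_num, by omega⟩)) rfl
      omega
end
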